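/- Let θ be real with sin θ ≠ 0 and cos θ ≠ 0 and set ω' = cot θ − tan θ. If x : ℝ → ℝ⁴ solves x'(t) = A(θ)·x(t) with x(0) = a·(1,0,0,1) + b·(0,1,−1,0) ≠ 0, then ‖x(t)‖ = e^{2t}·‖x(0)‖ for all t; in particular ‖x(t)‖ → ∞ as t → ∞. -/

import Mathlib

open Real Matrix

noncomputable def alphaA (θ : ℝ) : Matrix (Fin 4) (Fin 4) ℝ :=
  !![1, -Real.cot θ, -Real.tan θ, 1;
     Real.cot θ, 1, -1, -Real.tan θ;
     Real.tan θ, -1, 1, -Real.cot θ;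
     1, Real.tan θ, Real.cot θ, 1]

open Filter in
theorem stmt17 (θ : ℝ) (hs : Real.sin θ ≠ 0) (hc : Real.cos θ ≠ 0)
    (x : ℝ → EuclideanSpace ℝ (Fin 4))
    (hx : ∀ t, HasDerivAt x (WithLp.toLp 2 ((alphaA θ).mulVec (x t) : Fin 4 → ℝ) : EuclideanSpace ℝ (Fin 4)) t)
    (a b : ℝ)
    (h0 : x 0 = a • (WithLp.toLp 2 (![1,0,0,1] : Fin 4 → ℝ) : EuclideanSpace ℝ (Fin 4)) +
        b • (WithLp.toLp 2 (![0,1,-1,0] : Fin 4 → ℝ) : EuclideanSpace ℝ (Fin 4)))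
    (hne : x 0 ≠ 0) :
    (∀ t, ‖x t‖ = Real.exp (2 * t) * ‖x 0‖) ∧
    Tendsto (fun t => ‖x t‖) atTop atTop := by
  set ω : ℝ := Real.cot θ - Real.tan θ with hω
  set w1 : EuclideanSpace ℝ (Fin 4) := (WithLp.toLp 2 (![1,0,0,1] : Fin 4 → ℝ) : EuclideanSpace ℝ (Fin 4)) with hw1
  set w2 : EuclideanSpace ℝ (Fin 4) := (WithLp.toLp 2 (![0,1,-1,0] : Fin 4 → ℝ) : EuclideanSpace ℝ (Fin 4)) with hw2
  set α : ℝ → ℝ := fun t => Real.exp (2*t) * (a * Real.cos (ω*t) - b * Real.sin (ω*t)) with hα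
  set β : ℝ → ℝ := fun t => Real.exp (2*t) * (a * Real.sin (ω*t) + b * Real.cos (ω*t)) with hβ
  set y : ℝ → EuclideanSpace ℝ (Fin 4) := fun t => α t • w1 + β t • w2 with hy
  -- derivative of α and β
  have hα' : ∀ t, HasDerivAt α (2 * α t - ω * β t) t := by
    intro t
    have h1 : HasDerivAt (fun t => Real.exp (2*t)) (2 * Real.exp (2*t)) t := by
      simpa [mul_comm] using ((hasDerivAt_id t).const_mul 2).exp
    have h2 : HasDerivAt (fun t => a * Real.cos (ω*t) - b * Real.sin (ω*t))
        (a * (-Real.sin (ω*t) * ω) - b * (Real.cos (ω*t) * ω)) t := by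
      have hc' : HasDerivAt (fun t => Real.cos (ω*t)) (-Real.sin (ω*t) * ω) t := by
        simpa [Function.comp_def] using (Real.hasDerivAt_cos (ω*t)).comp t ((hasDerivAt_id t).const_mul ω)
      have hs' : HasDerivAt (fun t => Real.sin (ω*t)) (Real.cos (ω*t) * ω) t := by
        simpa [Function.comp_def] using (Real.hasDerivAt_sin (ω*t)).comp t ((hasDerivAt_id t).const_mul ω)
      exact (hc'.const_mul a).sub (hs'.const_mul b)
    have : HasDerivAt (fun t => Real.exp (2*t) * (a * Real.cos (ω*t) - b * Real.sin (ω*t))) _ t := h1.mul h2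
    convert this using 1
    simp only [hα, hβ]
    ring
  have hβ' : ∀ t, HasDerivAt β (ω * α t + 2 * β t) t := by
    intro t
    have h1 : HasDerivAt (fun t => Real.exp (2*t)) (2 * Real.exp (2*t)) t := by
      simpa [mul_comm] using ((hasDerivAt_id t).const_mul 2).exp
    have h2 : HasDerivAt (fun t => a * Real.sin (ω*t) + b * Real.cos (ω*t))
        (a * (Real.cos (ω*t) * ω) + b * (-Real.sin (ω*t) * ω)) t := by
      have hc' : HasDerivAt (fun t => Real.cos (ω*t)) (-Real.sin (ω*t) * ω) t := by
        simpa [Function.comp_def] using (Real.hasDerivAt_cos (ω*t)).comp t ((hasDerivAt_id t).const_mul ω)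
      have hs' : HasDerivAt (fun t => Real.sin (ω*t)) (Real.cos (ω*t) * ω) t := by
        simpa [Function.comp_def] using (Real.hasDerivAt_sin (ω*t)).comp t ((hasDerivAt_id t).const_mul ω)
      exact (hs'.const_mul a).add (hc'.const_mul b)
    have : HasDerivAt (fun t => Real.exp (2*t) * (a * Real.sin (ω*t) + b * Real.cos (ω*t))) _ t := h1.mul h2
    convert this using 1
    simp only [hα, hβ]
    ring
  -- key algebraic identity: A.mulVec (y t) = (2 α - ω β) • w1 + (ω α + 2 β) • w2
  have hkey : ∀ t, ((alphaA θ).mulVec (y t) : Fin 4 → ℝ) =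
      WithLp.ofLp ((2 * α t - ω * β t) • w1 + (ω * α t + 2 * β t) • w2 : EuclideanSpace ℝ (Fin 4)) := by
    intro t
    funext i
    have hyi : ∀ j : Fin 4, (y t) j = α t * (![1,0,0,1] : Fin 4 → ℝ) j + β t * (![0,1,-1,0] : Fin 4 → ℝ) j := by
      intro j; rfl
    fin_cases i <;>
      simp [alphaA, Matrix.mulVec, dotProduct, Fin.sum_univ_four, hyi, hy, hw1, hw2,
        PiLp.add_apply, PiLp.smul_apply, smul_eq_mul, hω] <;> ring
  -- y solves the ODE
  have hy' : ∀ t, HasDerivAt y (WithLp.toLp 2 ((alphaA θ).mulVec (y t) : Fin 4 → ℝ) : EuclideanSpace ℝ (Fin 4)) t := by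
    intro t
    rw [hkey t, WithLp.toLp_ofLp]
    exact ((hα' t).smul_const w1).add ((hβ' t).smul_const w2)
  -- x = y by uniqueness
  have hy0 : y 0 = x 0 := by
    rw [h0]
    simp [hy, hα, hβ]
  -- Lipschitz vector field
  let L' := LinearMap.toContinuousLinearMap ((alphaA θ).toEuclideanLin)
  have hLz : ∀ z : EuclideanSpace ℝ (Fin 4),
      L' z = (WithLp.toLp 2 ((alphaA θ).mulVec z : Fin 4 → ℝ) : EuclideanSpace ℝ (Fin 4)) := fun z => rfl
  let v : ℝ → EuclideanSpace ℝ (Fin 4) → EuclideanSpace ℝ (Fin 4) := fun _ z => L' z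
  have hK : ∀ s : ℝ, LipschitzWith ‖L'‖₊ (v s) := fun s => L'.lipschitz
  have hxv : ∀ t, HasDerivAt x (v t (x t)) t := by
    intro t; rw [show v t (x t) = _ from hLz (x t)]; exact hx t
  have hyv : ∀ t, HasDerivAt y (v t (y t)) t := by
    intro t; rw [show v t (y t) = _ from hLz (y t)]; exact hy' t
  have hxy : ∀ t, x t = y t := by
    intro t
    have htm : t ∈ Set.Icc (-(|t|+1)) (|t|+1) := by
      constructor <;> [linarith [neg_abs_le t, abs_nonneg t]; linarith [le_abs_self t, abs_nonneg t]]
    have h0m : (0:ℝ) ∈ Set.Ioo (-(|t|+1)) (|t|+1) := by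
      constructor <;> [linarith [abs_nonneg t]; linarith [abs_nonneg t]]
    exact ODE_solution_unique_of_mem_Icc
      (v := v) (s := fun _ => Set.univ)
      (fun s _ => (hK s).lipschitzOnWith)
      h0m
      (fun s hs => ((hxv s).continuousAt.continuousWithinAt))
      (fun s _ => hxv s) (fun _ _ => trivial)
      (fun s hs => ((hyv s).continuousAt.continuousWithinAt))
      (fun s _ => hyv s) (fun _ _ => trivial)
      (hy0.symm) htm
  -- norm computation
  have hnorm : ∀ t, ‖x t‖ = Real.exp (2 * t) * ‖x 0‖ := by
    intro t
    rw [hxy t, ← hy0]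
    have hsq : ∀ s, ‖y s‖ = Real.sqrt (2 * (α s ^ 2 + β s ^ 2)) := by
      intro s
      rw [EuclideanSpace.norm_eq]
      congr 1
      simp [Fin.sum_univ_four, hy, hw1, hw2, PiLp.add_apply, PiLp.smul_apply, smul_eq_mul]
      ring
    rw [hsq t, hsq 0]
    have hab : ∀ s, α s ^ 2 + β s ^ 2 = Real.exp (2*s) ^ 2 * (a^2 + b^2) := by
      intro s
      simp only [hα, hβ]
      have := Real.sin_sq_add_cos_sq (ω*s)
      nlinarith [Real.sin_sq_add_cos_sq (ω*s)]
    rw [hab t, hab 0]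
    simp only [mul_zero, Real.exp_zero, one_pow, one_mul]
    rw [show 2 * (Real.exp (2*t)^2 * (a^2+b^2)) = Real.exp (2*t)^2 * (2*(a^2+b^2)) by ring,
      Real.sqrt_mul (sq_nonneg _), Real.sqrt_sq (Real.exp_pos _).le]
  refine ⟨hnorm, ?_⟩
  have hpos : 0 < ‖x 0‖ := norm_pos_iff.mpr hne
  have : Tendsto (fun t => Real.exp (2*t) * ‖x 0‖) atTop atTop := by
    apply Tendsto.atTop_mul_const hpos
    exact Real.tendsto_exp_atTop.comp (tendsto_id.const_mul_atTop two_pos)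
  exact this.congr (fun t => (hnorm t).symm)
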